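/- Let G = (V,E) be a finite connected simple graph with m edges. Then Tetali's formula holds: for all i, j ∈ V, h(i,j) = m·R(i,j) + (1/2)∑_{u∈V} deg(u)·(R(j,u) - R(u,i)), where h is the hitting time of the simple random walk and R the effective resistance with unit conductances. -/

import Mathlib

/-- `θ` is a unit flow from `u` to `v` on the graph `G`. -/
def IsUnitFlow {V : Type*} [Fintype V] (G : SimpleGraph V) (u v : V) (θ : V → V → ℝ) : Prop :=
  (∀ x y, θ x y = -θ y x) ∧
  (∀ x y, ¬ G.Adj x y → θ x y = 0) ∧
  (∀ x, x ≠ u → x ≠ v → ∑ y, θ x y = 0) ∧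
  (∑ y, θ u y = 1)

/-- The energy dissipated by a flow with unit resistances. -/
noncomputable def flowEnergy {V : Type*} [Fintype V] (θ : V → V → ℝ) : ℝ :=
  (1 / 2) * ∑ x, ∑ y, (θ x y) ^ 2

/-- The effective resistance between `u` and `v` with unit resistances. -/
noncomputable def effRes {V : Type*} [Fintype V] (G : SimpleGraph V) (u v : V) : ℝ :=
  sInf {E | ∃ θ, IsUnitFlow G u v θ ∧ flowEnergy θ = E}

/-- `H i j` is the expected hitting time of `j` from `i` for the simple random walk. -/
def IsHittingTime {V : Type*} [Fintype V] (G : SimpleGraph V) [DecidableRel G.Adj]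
    (H : V → V → ℝ) : Prop :=
  (∀ j, H j j = 0) ∧
  ∀ i j, i ≠ j → H i j = 1 + (∑ y ∈ G.neighborFinset i, H y j) / (G.degree i : ℝ)

open Finset

set_option linter.unusedSectionVars false

namespace TetaliAux

variable {V : Type*} [Fintype V] [DecidableEq V] (G : SimpleGraph V) [DecidableRel G.Adj]

/-- The combinatorial Laplacian. -/
def lap (f : V → ℝ) : V → ℝ := fun x => ∑ y, if G.Adj x y then f x - f y else 0

lemma lap_eq_neighbor (f : V → ℝ) (x : V) :
    lap G f x = (G.degree x : ℝ) * f x - ∑ y ∈ G.neighborFinset x, f y := by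
  unfold lap
  rw [← Finset.sum_filter, ← SimpleGraph.neighborFinset_eq_filter,
    Finset.sum_sub_distrib, Finset.sum_const, ← SimpleGraph.card_neighborFinset_eq_degree,
    nsmul_eq_mul]

lemma sum_lap (f : V → ℝ) : ∑ x, lap G f x = 0 := by
  have h : ∑ x, lap G f x = -∑ x, lap G f x := by
    unfold lap
    conv_lhs => rw [Finset.sum_comm]
    rw [← Finset.sum_neg_distrib]
    apply Finset.sum_congr rfl; intro x _
    rw [← Finset.sum_neg_distrib]
    apply Finset.sum_congr rfl; intro y _
    by_cases h : G.Adj x y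
    · rw [if_pos h.symm, if_pos h]; ring
    · rw [if_neg (fun hh => h hh.symm), if_neg h, neg_zero]
  linarith

/-- The Dirichlet form. -/
def quad (f g : V → ℝ) : ℝ := ∑ x, ∑ y, if G.Adj x y then (f x - f y) * (g x - g y) else 0

lemma quad_comm (f g : V → ℝ) : quad G f g = quad G g f := by
  unfold quad
  apply Finset.sum_congr rfl; intro x _
  apply Finset.sum_congr rfl; intro y _
  by_cases h : G.Adj x y <;> simp [h, mul_comm]

lemma inner_lap (f g : V → ℝ) : ∑ x, f x * lap G g x = (1/2) * quad G f g := by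
  have h1 : ∑ x, f x * lap G g x
      = ∑ x, ∑ y, if G.Adj x y then f x * (g x - g y) else 0 := by
    apply Finset.sum_congr rfl; intro x _
    rw [lap, Finset.mul_sum]
    apply Finset.sum_congr rfl; intro y _
    by_cases h : G.Adj x y <;> simp [h]
  have h2 : ∑ x, f x * lap G g x
      = ∑ x, ∑ y, if G.Adj x y then -(f y * (g x - g y)) else 0 := by
    rw [h1, Finset.sum_comm]
    apply Finset.sum_congr rfl; intro x _
    apply Finset.sum_congr rfl; intro y _
    by_cases h : G.Adj x y
    · rw [if_pos h.symm, if_pos h]; ring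
    · rw [if_neg (fun hh => h hh.symm), if_neg h]
  have h3 : 2 * ∑ x, f x * lap G g x = quad G f g := by
    nth_rewrite 1 [two_mul]
    nth_rewrite 1 [h1]
    rw [h2, ← Finset.sum_add_distrib]
    unfold quad
    apply Finset.sum_congr rfl; intro x _
    rw [← Finset.sum_add_distrib]
    apply Finset.sum_congr rfl; intro y _
    by_cases h : G.Adj x y
    · rw [if_pos h, if_pos h, if_pos h]; ring
    · rw [if_neg h, if_neg h, if_neg h, add_zero]
  linarith

lemma lap_selfadjoint (f g : V → ℝ) :
    ∑ x, f x * lap G g x = ∑ x, g x * lap G f x := by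
  rw [inner_lap, inner_lap, quad_comm]

lemma lap_ker_const (hG : G.Connected) (f : V → ℝ) (h : lap G f = 0) :
    ∀ x y, f x = f y := by
  have hq : quad G f f = 0 := by
    have := inner_lap G f f
    rw [h] at this
    simp only [Pi.zero_apply, mul_zero, Finset.sum_const_zero] at this
    linarith
  have hadj : ∀ x y, G.Adj x y → f x = f y := by
    have hnn : ∀ x ∈ (univ : Finset V),
        (0:ℝ) ≤ ∑ y, if G.Adj x y then (f x - f y) * (f x - f y) else 0 := by
      intro x _
      apply Finset.sum_nonneg
      intro y _
      by_cases h : G.Adj x y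
      · rw [if_pos h]; exact mul_self_nonneg _
      · rw [if_neg h]
    intro x y hxy
    have h1 := (Finset.sum_eq_zero_iff_of_nonneg hnn).mp hq x (mem_univ x)
    have hnn2 : ∀ y ∈ (univ : Finset V),
        (0:ℝ) ≤ if G.Adj x y then (f x - f y) * (f x - f y) else 0 := by
      intro y _
      by_cases h : G.Adj x y
      · rw [if_pos h]; exact mul_self_nonneg _
      · rw [if_neg h]
    have h2 := (Finset.sum_eq_zero_iff_of_nonneg hnn2).mp h1 y (mem_univ y)
    rw [if_pos hxy] at h2
    have := mul_self_eq_zero.mp h2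
    linarith
  intro x y
  obtain ⟨w⟩ := hG.preconnected x y
  induction w with
  | nil => rfl
  | cons h p ih => exact (hadj _ _ h).trans ih

/-- The Laplacian as a linear map. -/
def lapLM : (V → ℝ) →ₗ[ℝ] (V → ℝ) where
  toFun := lap G
  map_add' f g := by
    funext x
    simp only [lap, Pi.add_apply]
    rw [← Finset.sum_add_distrib]
    apply Finset.sum_congr rfl; intro y _
    by_cases h : G.Adj x y
    · rw [if_pos h, if_pos h, if_pos h]; ring
    · rw [if_neg h, if_neg h, if_neg h, add_zero]
  map_smul' c f := by
    funext x
    simp only [lap, Pi.smul_apply, smul_eq_mul, RingHom.id_apply]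
    rw [Finset.mul_sum]
    apply Finset.sum_congr rfl; intro y _
    by_cases h : G.Adj x y
    · rw [if_pos h, if_pos h]; ring
    · rw [if_neg h, if_neg h, mul_zero]

/-- The sum functional as a linear map. -/
def sumLM : (V → ℝ) →ₗ[ℝ] ℝ where
  toFun f := ∑ x, f x
  map_add' f g := by simp [Finset.sum_add_distrib]
  map_smul' c f := by simp [Finset.mul_sum]

lemma lap_surj (hG : G.Connected) (g : V → ℝ) (hg : ∑ x, g x = 0) :
    ∃ f, lap G f = g := by
  classical
  have hne : Nonempty V := hG.nonempty
  obtain ⟨x₀⟩ := hne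
  have hker : LinearMap.ker (lapLM G) = Submodule.span ℝ {(fun _ => (1:ℝ) : V → ℝ)} := by
    apply le_antisymm
    · intro f hf
      have h0 : lap G f = 0 := hf
      have hc := lap_ker_const G hG f h0
      have hf2 : f = f x₀ • (fun _ => (1:ℝ) : V → ℝ) := by
        funext x
        simp [hc x x₀]
      rw [hf2]
      exact Submodule.smul_mem _ _ (Submodule.mem_span_singleton_self _)
    · rw [Submodule.span_le, Set.singleton_subset_iff]
      show lap G (fun _ => (1:ℝ)) = 0
      funext x
      simp [lap]
  have hone : (fun _ => (1:ℝ) : V → ℝ) ≠ 0 := by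
    intro h
    simpa using congrFun h x₀
  have hkerrank : Module.finrank ℝ (LinearMap.ker (lapLM G)) = 1 := by
    rw [hker]
    exact finrank_span_singleton hone
  have hdim : Module.finrank ℝ (V → ℝ) = Fintype.card V := by
    simp [Module.finrank_pi]
  have hrank : Module.finrank ℝ (LinearMap.range (lapLM G)) = Fintype.card V - 1 := by
    have := LinearMap.finrank_range_add_finrank_ker (lapLM G)
    rw [hkerrank, hdim] at this
    omega
  have hsumtop : LinearMap.range (sumLM (V := V)) = ⊤ := by
    rw [LinearMap.range_eq_top]
    intro c
    refine ⟨fun x => if x = x₀ then c else 0, ?_⟩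
    show ∑ x, (if x = x₀ then c else 0) = c
    simp
  have hsumker : Module.finrank ℝ (LinearMap.ker (sumLM (V := V))) = Fintype.card V - 1 := by
    have := LinearMap.finrank_range_add_finrank_ker (sumLM (V := V))
    rw [hsumtop, hdim, finrank_top] at this
    have h1 : Module.finrank ℝ ℝ = 1 := Module.finrank_self ℝ
    omega
  have hle : LinearMap.range (lapLM G) ≤ LinearMap.ker (sumLM (V := V)) := by
    rintro _ ⟨f, rfl⟩
    exact sum_lap G f
  have heq : LinearMap.range (lapLM G) = LinearMap.ker (sumLM (V := V)) :=
    Submodule.eq_of_le_of_finrank_le hle (by rw [hrank, hsumker])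
  have hgmem : g ∈ LinearMap.ker (sumLM (V := V)) := hg
  rw [← heq] at hgmem
  obtain ⟨f, hf⟩ := hgmem
  exact ⟨f, hf⟩
lemma flow_total (θ : V → V → ℝ) (hanti : ∀ x y, θ x y = -θ y x) :
    ∑ x, ∑ y, θ x y = 0 := by
  have h : ∑ x, ∑ y, θ x y = -∑ x, ∑ y, θ x y := by
    conv_lhs => rw [Finset.sum_comm]
    rw [← Finset.sum_neg_distrib]
    apply Finset.sum_congr rfl; intro x _
    rw [← Finset.sum_neg_distrib]
    apply Finset.sum_congr rfl; intro y _
    exact hanti y x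
  linarith

lemma flow_div_off (u v : V) (θ : V → V → ℝ) (hθ : IsUnitFlow G u v θ)
    (x : V) (hx : x ∉ ({u, v} : Finset V)) : ∑ y, θ x y = 0 := by
  simp only [Finset.mem_insert, Finset.mem_singleton, not_or] at hx
  exact hθ.2.2.1 x hx.1 hx.2

lemma flow_div_snd {u v : V} (huv : u ≠ v) (θ : V → V → ℝ) (hθ : IsUnitFlow G u v θ) :
    ∑ y, θ v y = -1 := by
  have htot := flow_total θ hθ.1
  have hsub : ∑ x ∈ ({u, v} : Finset V), ∑ y, θ x y = ∑ x, ∑ y, θ x y :=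
    Finset.sum_subset (Finset.subset_univ _)
      (fun x _ hx => flow_div_off G u v θ hθ x hx)
  rw [Finset.sum_pair huv, hθ.2.2.2, htot] at hsub
  linarith

lemma effRes_self (u : V) : effRes G u u = 0 := by
  have hemp : {E | ∃ θ, IsUnitFlow G u u θ ∧ flowEnergy θ = E} = ∅ := by
    rw [Set.eq_empty_iff_forall_notMem]
    rintro E ⟨θ, hθ, -⟩
    have htot := flow_total θ hθ.1
    have hsub : ∑ x ∈ ({u} : Finset V), ∑ y, θ x y = ∑ x, ∑ y, θ x y :=
      Finset.sum_subset (Finset.subset_univ _)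
        (fun x _ hx => by
          simp only [Finset.mem_singleton] at hx
          exact hθ.2.2.1 x hx hx)
    rw [Finset.sum_singleton, hθ.2.2.2, htot] at hsub
    exact one_ne_zero hsub
  rw [effRes, hemp, Real.sInf_empty]

lemma isUnitFlow_neg {u v : V} (huv : u ≠ v) (θ : V → V → ℝ) (hθ : IsUnitFlow G u v θ) :
    IsUnitFlow G v u (fun x y => -θ x y) := by
  refine ⟨fun x y => congrArg Neg.neg (hθ.1 x y),
    fun x y h => by show -θ x y = 0; rw [hθ.2.1 x y h, neg_zero],
    fun x hxv hxu => ?_, ?_⟩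
  · rw [Finset.sum_neg_distrib, hθ.2.2.1 x hxu hxv, neg_zero]
  · rw [Finset.sum_neg_distrib, flow_div_snd G huv θ hθ, neg_neg]

lemma effRes_comm (u v : V) : effRes G u v = effRes G v u := by
  by_cases huv : u = v
  · subst huv; rfl
  have hsets : {E | ∃ θ, IsUnitFlow G u v θ ∧ flowEnergy θ = E}
      = {E | ∃ θ, IsUnitFlow G v u θ ∧ flowEnergy θ = E} := by
    ext E
    constructor
    · rintro ⟨θ, hθ, rfl⟩
      exact ⟨fun x y => -θ x y, isUnitFlow_neg G huv θ hθ, by simp [flowEnergy]⟩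
    · rintro ⟨θ, hθ, rfl⟩
      exact ⟨fun x y => -θ x y, isUnitFlow_neg G (Ne.symm huv) θ hθ, by simp [flowEnergy]⟩
  rw [effRes, effRes, hsets]

lemma flow_pairing {u v : V} (huv : u ≠ v) (θ : V → V → ℝ) (hθ : IsUnitFlow G u v θ)
    (φ : V → ℝ) : ∑ x, ∑ y, θ x y * (φ x - φ y) = 2 * (φ u - φ v) := by
  have h1 : ∑ x, ∑ y, θ x y * (φ x - φ y)
      = (∑ x, φ x * ∑ y, θ x y) + ∑ x, φ x * ∑ y, θ x y := by
    have ha : ∑ x, ∑ y, θ x y * φ x = ∑ x, φ x * ∑ y, θ x y := by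
      apply Finset.sum_congr rfl; intro x _
      rw [Finset.mul_sum]
      apply Finset.sum_congr rfl; intro y _; ring
    have hb : ∑ x, ∑ y, θ x y * φ y = -∑ x, φ x * ∑ y, θ x y := by
      rw [Finset.sum_comm, ← Finset.sum_neg_distrib]
      apply Finset.sum_congr rfl; intro x _
      rw [Finset.mul_sum, ← Finset.sum_neg_distrib]
      apply Finset.sum_congr rfl; intro y _
      rw [hθ.1 y x]; ring
    calc ∑ x, ∑ y, θ x y * (φ x - φ y)
        = (∑ x, ∑ y, θ x y * φ x) - ∑ x, ∑ y, θ x y * φ y := by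
          rw [← Finset.sum_sub_distrib]
          apply Finset.sum_congr rfl; intro x _
          rw [← Finset.sum_sub_distrib]
          apply Finset.sum_congr rfl; intro y _; ring
      _ = _ := by rw [ha, hb]; ring
  have h2 : ∑ x, φ x * ∑ y, θ x y = φ u - φ v := by
    have hsub : ∑ x ∈ ({u, v} : Finset V), φ x * ∑ y, θ x y
        = ∑ x, φ x * ∑ y, θ x y :=
      Finset.sum_subset (Finset.subset_univ _)
        (fun x _ hx => by rw [flow_div_off G u v θ hθ x hx, mul_zero])
    rw [Finset.sum_pair huv, hθ.2.2.2, flow_div_snd G huv θ hθ] at hsub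
    rw [← hsub]; ring
  rw [h1, h2]; ring

lemma effRes_eq_green (K : V → V → ℝ)
    (hK1 : ∀ u, lap G (K u)
      = fun x => (if x = u then 1 else 0) - 1 / (Fintype.card V : ℝ))
    (u v : V) :
    effRes G u v = K u u - K u v - K v u + K v v := by
  by_cases huv : u = v
  · subst huv; rw [effRes_self]; ring
  set φ : V → ℝ := fun x => K u x - K v x with hφdef
  have hlapφ : lap G φ = fun x => (if x = u then 1 else 0) - (if x = v then 1 else 0) := by
    have hsub := (lapLM G).map_sub (K u) (K v)
    have : lap G φ = lap G (K u) - lap G (K v) := by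
      have : φ = K u - K v := rfl
      rw [this]; exact hsub
    rw [this, hK1 u, hK1 v]
    funext x
    simp only [Pi.sub_apply]
    ring
  set θφ : V → V → ℝ := fun x y => if G.Adj x y then φ x - φ y else 0 with hθφdef
  have hdiv : ∀ x, ∑ y, θφ x y = lap G φ x := fun x => rfl
  have hflow : IsUnitFlow G u v θφ := by
    refine ⟨fun x y => ?_, fun x y h => if_neg h, fun x hxu hxv => ?_, ?_⟩
    · show (if G.Adj x y then φ x - φ y else 0) = -(if G.Adj y x then φ y - φ x else 0)
      by_cases h : G.Adj x y
      · rw [if_pos h, if_pos h.symm]; ring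
      · rw [if_neg h, if_neg (fun hh => h hh.symm), neg_zero]
    · rw [hdiv, hlapφ]
      simp [hxu, hxv]
    · rw [hdiv, hlapφ]
      simp [huv]
  have henergy : flowEnergy θφ = φ u - φ v := by
    have hsq : ∑ x, ∑ y, (θφ x y) ^ 2 = quad G φ φ := by
      apply Finset.sum_congr rfl; intro x _
      apply Finset.sum_congr rfl; intro y _
      by_cases h : G.Adj x y
      · simp only [hθφdef, if_pos h]; ring
      · simp only [hθφdef, if_neg h]; ring
    have hil := inner_lap G φ φ
    have hval : ∑ x, φ x * lap G φ x = φ u - φ v := by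
      rw [hlapφ]
      simp [mul_sub, Finset.sum_sub_distrib, mul_ite, mul_one, mul_zero]
    rw [flowEnergy, hsq, ← hil, hval]
  have hRval : φ u - φ v = K u u - K u v - K v u + K v v := by
    simp only [hφdef]; ring
  have hlb : ∀ E ∈ {E | ∃ θ, IsUnitFlow G u v θ ∧ flowEnergy θ = E},
      φ u - φ v ≤ E := by
    rintro E ⟨θ, hθ, rfl⟩
    have hcross : ∑ x, ∑ y, θ x y * θφ x y = 2 * (φ u - φ v) := by
      have hc : ∀ x y, θ x y * θφ x y = θ x y * (φ x - φ y) := by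
        intro x y
        by_cases h : G.Adj x y
        · rw [hθφdef]; simp [if_pos h]
        · rw [hθ.2.1 x y h]; ring
      calc ∑ x, ∑ y, θ x y * θφ x y = ∑ x, ∑ y, θ x y * (φ x - φ y) := by
            apply Finset.sum_congr rfl; intro x _
            apply Finset.sum_congr rfl; intro y _
            exact hc x y
        _ = 2 * (φ u - φ v) := flow_pairing G huv θ hθ φ
    have hθφsq : ∑ x, ∑ y, (θφ x y) ^ 2 = 2 * (φ u - φ v) := by
      have := henergy
      rw [flowEnergy] at this
      linarith
    have hinner : ∀ x, ∑ y, (θ x y - θφ x y) ^ 2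
        = (∑ y, (θ x y) ^ 2) - 2 * (∑ y, θ x y * θφ x y) + ∑ y, (θφ x y) ^ 2 := by
      intro x
      rw [Finset.mul_sum, ← Finset.sum_sub_distrib, ← Finset.sum_add_distrib]
      apply Finset.sum_congr rfl; intro y _
      ring
    have hexp : ∑ x, ∑ y, (θ x y - θφ x y) ^ 2
        = (∑ x, ∑ y, (θ x y) ^ 2) - 2 * (∑ x, ∑ y, θ x y * θφ x y)
          + ∑ x, ∑ y, (θφ x y) ^ 2 := by
      rw [Finset.mul_sum, ← Finset.sum_sub_distrib, ← Finset.sum_add_distrib]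
      apply Finset.sum_congr rfl; intro x _
      exact hinner x
    have hnn : (0:ℝ) ≤ ∑ x, ∑ y, (θ x y - θφ x y) ^ 2 :=
      Finset.sum_nonneg fun x _ => Finset.sum_nonneg fun y _ => sq_nonneg _
    rw [hexp, hcross, hθφsq] at hnn
    rw [flowEnergy]
    linarith
  have hleast : IsLeast {E | ∃ θ, IsUnitFlow G u v θ ∧ flowEnergy θ = E} (φ u - φ v) :=
    ⟨⟨θφ, hflow, henergy⟩, hlb⟩
  rw [effRes, hleast.csInf_eq, hRval]
lemma lap_sub_const (f : V → ℝ) (c : ℝ) :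
    lap G (fun x => f x - c) = lap G f := by
  funext x
  unfold lap
  apply Finset.sum_congr rfl; intro y _
  by_cases h : G.Adj x y
  · rw [if_pos h, if_pos h]; ring
  · rw [if_neg h, if_neg h]

lemma exists_green (hG : G.Connected) :
    ∃ K : V → V → ℝ,
      (∀ u, lap G (K u) = fun x => (if x = u then 1 else 0) - 1 / (Fintype.card V : ℝ)) ∧
      (∀ u, ∑ x, K u x = 0) := by
  have hne : Nonempty V := hG.nonempty
  have hn0 : (Fintype.card V : ℝ) ≠ 0 := by
    exact_mod_cast Fintype.card_ne_zero
  have hex : ∀ u : V, ∃ f, lap G f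
      = fun x => (if x = u then 1 else 0) - 1 / (Fintype.card V : ℝ) := by
    intro u
    apply lap_surj G hG
    rw [Finset.sum_sub_distrib]
    simp only [Finset.sum_ite_eq', Finset.mem_univ, if_true, Finset.sum_const,
      Finset.card_univ, nsmul_eq_mul]
    field_simp
    ring
  choose F hF using hex
  refine ⟨fun u x => F u x - (∑ z, F u z) / (Fintype.card V : ℝ), fun u => ?_, fun u => ?_⟩
  · rw [lap_sub_const, hF u]
  · rw [Finset.sum_sub_distrib, Finset.sum_const, Finset.card_univ, nsmul_eq_mul]
    field_simp
    ring

lemma green_pair (K : V → V → ℝ)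
    (hK1 : ∀ u, lap G (K u)
      = fun x => (if x = u then 1 else 0) - 1 / (Fintype.card V : ℝ))
    (hK2 : ∀ u, ∑ x, K u x = 0) (a b : V) :
    ∑ x, K a x * lap G (K b) x = K a b := by
  rw [hK1 b]
  have h1 : ∑ x, K a x * ((if x = b then (1:ℝ) else 0) - 1 / (Fintype.card V : ℝ))
      = (∑ x, if x = b then K a x else 0)
        - (∑ x, K a x) * (1 / (Fintype.card V : ℝ)) := by
    rw [Finset.sum_mul, ← Finset.sum_sub_distrib]
    apply Finset.sum_congr rfl; intro x _
    by_cases h : x = b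
    · rw [if_pos h, if_pos h]; ring
    · rw [if_neg h, if_neg h]; ring
  rw [h1, hK2 a]
  simp

lemma green_symm (K : V → V → ℝ)
    (hK1 : ∀ u, lap G (K u)
      = fun x => (if x = u then 1 else 0) - 1 / (Fintype.card V : ℝ))
    (hK2 : ∀ u, ∑ x, K u x = 0) (u v : V) : K u v = K v u := by
  have h := lap_selfadjoint G (K u) (K v)
  rw [green_pair G K hK1 hK2 u v, green_pair G K hK1 hK2 v u] at h
  exact h

lemma deg_pos (hG : G.Connected) (hlt : 1 < Fintype.card V) (x : V) :
    0 < G.degree x := by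
  rw [SimpleGraph.degree_pos_iff_exists_adj]
  obtain ⟨y, hy⟩ := Fintype.exists_ne_of_one_lt_card hlt x
  obtain ⟨w⟩ := hG.preconnected x y
  cases w with
  | nil => exact absurd rfl hy
  | cons h _ => exact ⟨_, h⟩

lemma hitting_lap' (H : V → V → ℝ) (hH : IsHittingTime G H) (j : V)
    (hdeg : ∀ x, 0 < G.degree x) :
    lap G (fun x => H x j)
      = fun x => (G.degree x : ℝ)
        - 2 * (G.edgeFinset.card : ℝ) * (if x = j then 1 else 0) := by
  set f : V → ℝ := fun x => H x j with hfdef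
  have hoff : ∀ x, x ≠ j → lap G f x = (G.degree x : ℝ) := by
    intro x hx
    rw [lap_eq_neighbor]
    have hd : (G.degree x : ℝ) ≠ 0 := by
      exact_mod_cast (hdeg x).ne'
    have := hH.2 x j hx
    have hfx : f x = 1 + (∑ y ∈ G.neighborFinset x, f y) / (G.degree x : ℝ) := this
    rw [hfx]
    field_simp
    ring
  have hsum := sum_lap G f
  have herase : ∑ x ∈ Finset.univ.erase j, lap G f x
      = (∑ x, (G.degree x : ℝ)) - (G.degree j : ℝ) := by
    rw [show (∑ x, (G.degree x : ℝ)) = ∑ x ∈ Finset.univ, (fun x => (G.degree x : ℝ)) x from rfl,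
      ← Finset.sum_erase_add _ _ (Finset.mem_univ j)]
    rw [add_sub_cancel_right]
    apply Finset.sum_congr rfl
    intro x hx
    exact hoff x (Finset.ne_of_mem_erase hx)
  have hj : lap G f j = (G.degree j : ℝ) - 2 * (G.edgeFinset.card : ℝ) := by
    have hsplit : lap G f j + ∑ x ∈ Finset.univ.erase j, lap G f x = ∑ x, lap G f x :=
      Finset.add_sum_erase _ _ (Finset.mem_univ j)
    rw [hsum, herase] at hsplit
    have hdegsum : ∑ x, (G.degree x : ℝ) = 2 * (G.edgeFinset.card : ℝ) := by
      rw [← Nat.cast_sum]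
      exact_mod_cast congrArg (Nat.cast (R := ℝ)) G.sum_degrees_eq_twice_card_edges
    rw [hdegsum] at hsplit
    linarith
  funext x
  by_cases hx : x = j
  · subst hx
    rw [hj, if_pos rfl]
    ring
  · rw [hoff x hx, if_neg hx]
    ring
end TetaliAux

open Finset TetaliAux in
/-- **Tetali's formula.** For a finite connected simple graph `G` with `m` edges,
`h(i,j) = m·R(i,j) + (1/2) ∑_{u} deg(u) (R(j,u) - R(u,i))` for all vertices `i, j`. -/
theorem tetali_formula {V : Type*} [Fintype V] [DecidableEq V] (G : SimpleGraph V)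
    [DecidableRel G.Adj] (hG : G.Connected) (H : V → V → ℝ) (hH : IsHittingTime G H)
    (i j : V) :
    H i j = (G.edgeFinset.card : ℝ) * effRes G i j
      + (1 / 2) * ∑ u, (G.degree u : ℝ) * (effRes G j u - effRes G u i) := by
  classical
  by_cases hij : i = j
  · subst hij
    rw [hH.1 i, TetaliAux.effRes_self G i]
    have hz : ∀ u, effRes G i u - effRes G u i = 0 := fun u => by
      rw [TetaliAux.effRes_comm G i u, sub_self]
    simp [hz]
  · obtain ⟨K, hK1, hK2⟩ := TetaliAux.exists_green G hG
    have hKs := TetaliAux.green_symm G K hK1 hK2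
    have hR : ∀ u v, effRes G u v = K u u - K u v - K v u + K v v :=
      TetaliAux.effRes_eq_green G K hK1
    have hlt : 1 < Fintype.card V := Fintype.one_lt_card_iff_nontrivial.mpr ⟨⟨i, j, hij⟩⟩
    have hn0 : (Fintype.card V : ℝ) ≠ 0 := by
      have : 0 < Fintype.card V := Nat.lt_of_lt_of_le Nat.zero_lt_one hlt.le
      exact_mod_cast this.ne'
    have hdeg := TetaliAux.deg_pos G hG hlt
    have hlapf := TetaliAux.hitting_lap' G H hH j hdeg
    set m : ℝ := (G.edgeFinset.card : ℝ) with hm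
    set f : V → ℝ := fun x => H x j with hf
    set g : V → ℝ := fun x =>
      m * (K x x - K x j - K j x + K j j)
      + (1/2) * ∑ u, (G.degree u : ℝ) *
          ((K j j - K j u - K u j + K u u) - (K u u - K u x - K x u + K x x)) with hg
    have hsumdeg : ∑ u, (G.degree u : ℝ) = 2 * m := by
      rw [hm, ← Nat.cast_sum]
      exact_mod_cast congrArg (Nat.cast (R := ℝ)) G.sum_degrees_eq_twice_card_edges
    set C : ℝ := m * K j j
      + (1/2) * ∑ u, (G.degree u : ℝ) * (K j j - K j u - K u j + K u u)
      - (1/2) * ∑ u, (G.degree u : ℝ) * K u u with hC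
    have hgform : ∀ x, g x
        = -(2*m) * K j x + (∑ u, (G.degree u : ℝ) * K u x) + C := by
      intro x
      have h1 : ∀ u, (G.degree u : ℝ) *
          ((K j j - K j u - K u j + K u u) - (K u u - K u x - K x u + K x x))
          = (G.degree u : ℝ) * (K j j - K j u - K u j + K u u)
            - (G.degree u : ℝ) * K u u
            + 2 * ((G.degree u : ℝ) * K u x)
            - (G.degree u : ℝ) * K x x := by
        intro u
        rw [hKs x u]
        ring
      have h2 : ∑ u, (G.degree u : ℝ) *
          ((K j j - K j u - K u j + K u u) - (K u u - K u x - K x u + K x x))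
          = (∑ u, (G.degree u : ℝ) * (K j j - K j u - K u j + K u u))
            - (∑ u, (G.degree u : ℝ) * K u u)
            + 2 * (∑ u, (G.degree u : ℝ) * K u x)
            - (∑ u, (G.degree u : ℝ)) * K x x := by
        rw [Finset.sum_congr rfl fun u _ => h1 u]
        rw [Finset.sum_sub_distrib, Finset.sum_add_distrib, Finset.sum_sub_distrib,
          ← Finset.mul_sum, ← Finset.sum_mul]
      show m * (K x x - K x j - K j x + K j j) + (1/2) * ∑ u, (G.degree u : ℝ) *
          ((K j j - K j u - K u j + K u u) - (K u u - K u x - K x u + K x x)) = _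
      rw [h2, hsumdeg, hKs x j, hC]
      ring
    have hgf : ∀ x y, g x - g y
        = -(2*m) * (K j x - K j y) + ∑ u, (G.degree u : ℝ) * (K u x - K u y) := by
      intro x y
      have hs : ∑ u, (G.degree u : ℝ) * (K u x - K u y)
          = (∑ u, (G.degree u : ℝ) * K u x) - ∑ u, (G.degree u : ℝ) * K u y := by
        rw [← Finset.sum_sub_distrib]
        exact Finset.sum_congr rfl fun u _ => by ring
      rw [hgform x, hgform y, hs]
      ring
    have hlapg : ∀ x, lap G g x
        = -(2*m) * lap G (K j) x + ∑ u, (G.degree u : ℝ) * lap G (K u) x := by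
      intro x
      show (∑ y, if G.Adj x y then g x - g y else 0) = _
      have hterm : ∀ y, (if G.Adj x y then g x - g y else 0)
          = -(2*m) * (if G.Adj x y then K j x - K j y else 0)
            + ∑ u, (G.degree u : ℝ) * (if G.Adj x y then K u x - K u y else 0) := by
        intro y
        by_cases h : G.Adj x y
        · simp only [if_pos h]
          exact hgf x y
        · simp only [if_neg h, mul_zero, add_zero, Finset.sum_const_zero]
      rw [Finset.sum_congr rfl fun y _ => hterm y, Finset.sum_add_distrib, ← Finset.mul_sum]
      congr 1
      rw [Finset.sum_comm]
      apply Finset.sum_congr rfl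
      intro u _
      rw [← Finset.mul_sum]
      rfl
    have hlapfg : lap G (fun x => f x - g x) = 0 := by
      have hmap : lap G (f - g) = lap G f - lap G g := by
        have := (lapLM G).map_sub f g
        exact this
      funext x
      have hx1 : lap G (fun x => f x - g x) x = lap G f x - lap G g x := by
        rw [show (fun x => f x - g x) = f - g from rfl, hmap]
        rfl
      rw [hx1]
      have hsum2 : ∑ u, (G.degree u : ℝ)
          * ((if x = u then (1:ℝ) else 0) - 1 / (Fintype.card V : ℝ))
          = (G.degree x : ℝ) - (2*m) * (1 / (Fintype.card V : ℝ)) := by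
        have hsplit : ∀ u : V, (G.degree u : ℝ)
            * ((if x = u then (1:ℝ) else 0) - 1 / (Fintype.card V : ℝ))
            = (if x = u then (G.degree u : ℝ) else 0)
              - (G.degree u : ℝ) * (1 / (Fintype.card V : ℝ)) := by
          intro u
          by_cases h : x = u
          · rw [if_pos h, if_pos h]; ring
          · rw [if_neg h, if_neg h]; ring
        rw [Finset.sum_congr rfl fun u _ => hsplit u, Finset.sum_sub_distrib,
          ← Finset.sum_mul, hsumdeg]
        simp
      have hKval : ∀ u : V, lap G (K u) x
          = (if x = u then (1:ℝ) else 0) - 1 / (Fintype.card V : ℝ) := by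
        intro u
        rw [hK1 u]
      rw [hlapg x, Finset.sum_congr rfl fun u _ => by rw [hKval u], hsum2, hKval j]
      have hfval : lap G f x
          = (G.degree x : ℝ) - 2 * m * (if x = j then 1 else 0) := by
        rw [hlapf]
      rw [hfval]
      show _ = (0 : V → ℝ) x
      simp only [Pi.zero_apply]
      ring
    have hconst := TetaliAux.lap_ker_const G hG _ hlapfg
    have hgj : g j = 0 := by
      have hz2 : ∑ u, (G.degree u : ℝ) *
          ((K j j - K j u - K u j + K u u) - (K u u - K u j - K j u + K j j)) = 0 :=
        Finset.sum_eq_zero fun u _ => by ring_nf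
      show m * (K j j - K j j - K j j + K j j) + (1/2) * ∑ u, (G.degree u : ℝ) *
          ((K j j - K j u - K u j + K u u) - (K u u - K u j - K j u + K j j)) = 0
      rw [hz2]
      ring
    have hfj : f j = 0 := hH.1 j
    have hfg : f i = g i := by
      have h2 := hconst i j
      have h3 : f i - g i = f j - g j := h2
      rw [hfj, hgj] at h3
      linarith
    calc H i j = f i := rfl
      _ = g i := hfg
      _ = m * effRes G i j
          + (1 / 2) * ∑ u, (G.degree u : ℝ) * (effRes G j u - effRes G u i) := by
        simp only [hR]
        rfl
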